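/- Let n > 0, x > 0, δ ∈ ℝ and y = x²/(n+x²). Then Q_n(x;δ) = (1/2) erf(δ/√2) − (δ n e^{-δ²/2}/(2√(2π))) ∫₀^{1-y} t^{n/2-1} ₁F₁(n/2+1; 3/2; δ²(1-t)/2) dt. -/

import Mathlib

open Real MeasureTheory

/-- Complementary error function. -/
noncomputable def erfc (z : ℝ) : ℝ := (2 / Real.sqrt π) * ∫ t in Set.Ioi z, Real.exp (-t^2)

/-- Error function. -/
noncomputable def erf (z : ℝ) : ℝ := 1 - erfc z

/-- Beta function B(a,b) = Γ(a)Γ(b)/Γ(a+b). -/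
noncomputable def betaFn (a b : ℝ) : ℝ := Real.Gamma a * Real.Gamma b / Real.Gamma (a + b)

/-- Regularized incomplete beta function I_y(a,b). -/
noncomputable def regIncBeta (y a b : ℝ) : ℝ :=
  (1 / betaFn a b) * ∫ t in (0:ℝ)..y, t ^ (a - 1) * (1 - t) ^ (b - 1)

/-- The function P_n(x;δ). -/
noncomputable def Pnt (n x δ : ℝ) : ℝ :=
  (1/2) * Real.exp (-δ^2/2) *
    ∑' j : ℕ, ((δ^2/2)^j / (Nat.factorial j : ℝ)) *
      regIncBeta (x^2/(n + x^2)) ((j : ℝ) + 1/2) (n/2)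

/-- The function Q_n(x;δ). -/
noncomputable def Qnt (n x δ : ℝ) : ℝ :=
  (1/2) * Real.exp (-δ^2/2) *
    ∑' j : ℕ, (δ / Real.sqrt 2) * ((δ^2/2)^j / Real.Gamma ((j : ℝ) + 3/2)) *
      regIncBeta (x^2/(n + x^2)) ((j : ℝ) + 1) (n/2)

/-- The noncentral t cumulative distribution function F_n(x;δ). -/
noncomputable def Fnt (n x δ : ℝ) : ℝ :=
  (1/2) * erfc (δ / Real.sqrt 2) + Pnt n x δ + Qnt n x δ

/-- The function R_n(x;δ) = erfc(δ/√2)/2 + Q_n(x;δ) − P_n(x;δ). -/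
noncomputable def Rnt (n x δ : ℝ) : ℝ :=
  (1/2) * erfc (δ / Real.sqrt 2) + Qnt n x δ - Pnt n x δ

/-- Kummer's confluent hypergeometric function ₁F₁(a;b;z). -/
noncomputable def kummerM (a b z : ℝ) : ℝ :=
  ∑' k : ℕ, (Real.Gamma (a + k) / Real.Gamma a) / (Real.Gamma (b + k) / Real.Gamma b) *
    z^k / (Nat.factorial k : ℝ)



open intervalIntegral

lemma betaFn_pos {a b : ℝ} (ha : 0 < a) (hb : 0 < b) : 0 < betaFn a b :=
  div_pos (mul_pos (Real.Gamma_pos_of_pos ha) (Real.Gamma_pos_of_pos hb))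
    (Real.Gamma_pos_of_pos (by linarith))

lemma betaFn_symm (a b : ℝ) : betaFn a b = betaFn b a := by
  unfold betaFn; rw [mul_comm, add_comm]

lemma betaKernel_intInt {a b : ℝ} (ha : 0 < a) (hb : 0 < b) :
    IntervalIntegrable (fun t : ℝ => t ^ (a-1) * (1-t) ^ (b-1)) volume 0 1 := by
  have h1 : IntervalIntegrable (fun t : ℝ => t ^ (a-1) * (1-t) ^ (b-1)) volume 0 (1/2) := by
    apply (intervalIntegrable_rpow' (by linarith : (-1:ℝ) < a - 1)).mul_continuousOn
    apply ContinuousOn.rpow_const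
    · exact (continuous_const.sub continuous_id).continuousOn
    · intro x hx
      rw [Set.uIcc_of_le (by norm_num)] at hx
      exact Or.inl (by nlinarith [hx.2])
  have h2 : IntervalIntegrable (fun t : ℝ => t ^ (a-1) * (1-t) ^ (b-1)) volume (1/2) 1 := by
    have hbase : IntervalIntegrable (fun t : ℝ => (1-t) ^ (b-1)) volume (1/2) 1 := by
      have := (intervalIntegrable_rpow' (by linarith : (-1:ℝ) < b - 1) (a := 0) (b := 1/2)).comp_sub_left 1
      norm_num at this
      exact this.symm
    apply hbase.continuousOn_mul
    apply ContinuousOn.rpow_const continuous_id.continuousOn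
    intro x hx
    rw [Set.uIcc_of_le (by norm_num)] at hx
    exact Or.inl (by simp only [id]; nlinarith [hx.1])
  exact h1.trans h2

lemma integral_betaKernel {a b : ℝ} (ha : 0 < a) (hb : 0 < b) :
    ∫ t in (0:ℝ)..1, t ^ (a-1) * (1-t) ^ (b-1) = betaFn a b := by
  have h := Complex.Gamma_mul_Gamma_eq_betaIntegral
    (show 0 < (a:ℂ).re by simpa using ha) (show 0 < (b:ℂ).re by simpa using hb)
  have hβ : Complex.betaIntegral (a:ℂ) (b:ℂ)
      = ((∫ t in (0:ℝ)..1, t ^ (a-1) * (1-t) ^ (b-1) : ℝ) : ℂ) := by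
    rw [Complex.betaIntegral, ← intervalIntegral.integral_ofReal]
    apply intervalIntegral.integral_congr
    intro t ht
    rw [Set.uIcc_of_le (by norm_num : (0:ℝ) ≤ 1)] at ht
    simp only [Complex.ofReal_mul, Complex.ofReal_cpow ht.1,
      Complex.ofReal_cpow (by linarith [ht.2] : (0:ℝ) ≤ 1 - t)]
    push_cast
    ring
  rw [hβ] at h
  have hne : Real.Gamma (a + b) ≠ 0 := (Real.Gamma_pos_of_pos (by linarith)).ne'
  have : Real.Gamma a * Real.Gamma b
      = Real.Gamma (a + b) * ∫ t in (0:ℝ)..1, t ^ (a-1) * (1-t) ^ (b-1) := by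
    have := h
    rw [← Complex.ofReal_add, Complex.Gamma_ofReal, Complex.Gamma_ofReal, Complex.Gamma_ofReal,
      ← Complex.ofReal_mul, ← Complex.ofReal_mul] at this
    exact_mod_cast this
  rw [betaFn, this]
  field_simp

lemma regIncBeta_compl {a b y : ℝ} (ha : 0 < a) (hb : 0 < b) (h0 : 0 ≤ y) (h1 : y ≤ 1) :
    regIncBeta y a b = 1 - regIncBeta (1-y) b a := by
  have hint := betaKernel_intInt ha hb
  have hsub : ∫ t in (0:ℝ)..(1-y), t ^ (b-1) * (1-t) ^ (a-1)
      = ∫ t in y..1, t ^ (a-1) * (1-t) ^ (b-1) := by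
    have h := intervalIntegral.integral_comp_sub_left (a := 0) (b := 1-y)
      (fun t : ℝ => t ^ (a-1) * (1-t) ^ (b-1)) 1
    simp only [sub_zero, sub_sub_cancel] at h
    rw [← h]
    apply intervalIntegral.integral_congr
    intro t _
    simp only [sub_sub_cancel, mul_comm]
  have hadd : (∫ t in (0:ℝ)..y, t ^ (a-1) * (1-t) ^ (b-1))
      + ∫ t in y..1, t ^ (a-1) * (1-t) ^ (b-1)
      = ∫ t in (0:ℝ)..1, t ^ (a-1) * (1-t) ^ (b-1) := by
    apply intervalIntegral.integral_add_adjacent_intervals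
    · apply hint.mono_set
      rw [Set.uIcc_of_le h0, Set.uIcc_of_le (by norm_num : (0:ℝ) ≤ 1)]
      exact Set.Icc_subset_Icc le_rfl h1
    · apply hint.mono_set
      rw [Set.uIcc_of_le h1, Set.uIcc_of_le (by norm_num : (0:ℝ) ≤ 1)]
      exact Set.Icc_subset_Icc h0 le_rfl
  have hBne : betaFn a b ≠ 0 := (betaFn_pos ha hb).ne'
  unfold regIncBeta
  rw [betaFn_symm b a, hsub]
  rw [integral_betaKernel ha hb] at hadd
  field_simp
  linarith [hadd]

lemma erf_eq_intervalIntegral (w : ℝ) :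
    erf w = (2 / Real.sqrt π) * ∫ t in (0:ℝ)..w, Real.exp (-t^2) := by
  have hi : Integrable (fun t : ℝ => Real.exp (-t^2)) := by
    have := integrable_exp_neg_mul_sq (one_pos (α := ℝ))
    simpa using this
  have htot : ∫ t : ℝ, Real.exp (-t^2) = Real.sqrt π := by
    have := integral_gaussian 1
    simpa using this
  have hIoi0 : ∫ t in Set.Ioi (0:ℝ), Real.exp (-t^2) = Real.sqrt π / 2 := by
    have := integral_gaussian_Ioi 1
    simpa using this
  have hsplit : ∀ v : ℝ, (∫ t in Set.Iic v, Real.exp (-t^2))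
      + ∫ t in Set.Ioi v, Real.exp (-t^2) = Real.sqrt π := by
    intro v
    rw [← htot, ← integral_add_compl measurableSet_Iic hi, Set.compl_Iic]
  have hIic : (∫ t in Set.Iic w, Real.exp (-t^2)) - ∫ t in Set.Iic (0:ℝ), Real.exp (-t^2)
      = ∫ t in (0:ℝ)..w, Real.exp (-t^2) :=
    intervalIntegral.integral_Iic_sub_Iic hi.integrableOn hi.integrableOn
  have hπ : Real.sqrt π ≠ 0 := by positivity
  unfold erf erfc
  have h1 := hsplit w
  have h2 := hsplit 0
  field_simp
  nlinarith [h1, h2, hIoi0, hIic]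

lemma Gamma_succ_32 (k : ℕ) : Real.Gamma ((k:ℝ) + 1 + 3/2) = ((k:ℝ) + 3/2) * Real.Gamma ((k:ℝ) + 3/2) := by
  have : (k:ℝ) + 1 + 3/2 = ((k:ℝ) + 3/2) + 1 := by ring
  rw [this, Real.Gamma_add_one (by positivity)]

lemma Gamma_32 : Real.Gamma (3/2) = Real.sqrt π / 2 := by
  have : (3/2 : ℝ) = 1/2 + 1 := by norm_num
  rw [this, Real.Gamma_add_one (by norm_num), Real.Gamma_one_half_eq]
  ring

lemma J_val (k : ℕ) : (∫ s in (0:ℝ)..1, (1-s^2)^k)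
    = Real.sqrt π * (Nat.factorial k) / (2 * Real.Gamma ((k:ℝ) + 3/2)) := by
  induction k with
  | zero =>
    simp [Gamma_32]
    have h : (2:ℝ) * (Real.sqrt π / 2) = Real.sqrt π := by ring
    rw [h, div_self (by positivity : Real.sqrt π ≠ 0)]
  | succ k ih =>
    have hrec : (2*(k:ℝ)+3) * (∫ s in (0:ℝ)..1, (1-s^2)^(k+1))
        - (2*(k:ℝ)+2) * (∫ s in (0:ℝ)..1, (1-s^2)^k) = 0 := by
      have hderiv : ∀ s ∈ Set.uIcc (0:ℝ) 1,
          HasDerivAt (fun s : ℝ => s * (1-s^2)^(k+1))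
            ((2*(k:ℝ)+3) * (1-s^2)^(k+1) - (2*(k:ℝ)+2) * (1-s^2)^k) s := by
        intro s _
        have h1 : HasDerivAt (fun s : ℝ => 1 - s^2) (-(2*s)) s := by
          simpa using (hasDerivAt_pow 2 s).const_sub 1
        have h2 := h1.pow (k+1)
        have h3 := (hasDerivAt_id s).mul h2
        have h3' : HasDerivAt (fun s : ℝ => s * (1-s^2)^(k+1))
            (1*(1-s^2)^(k+1) + s*(((k:ℝ)+1)*(1-s^2)^k*(-(2*s)))) s := by
          simpa [id, Pi.mul_def, Pi.pow_def] using h3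
        convert h3' using 1
        simp only [pow_succ]
        ring
      have hFTC := intervalIntegral.integral_eq_sub_of_hasDerivAt hderiv ?_
      · rw [intervalIntegral.integral_sub, intervalIntegral.integral_const_mul,
          intervalIntegral.integral_const_mul] at hFTC
        · simp at hFTC
          push_cast
          linarith [hFTC]
        · exact (Continuous.intervalIntegrable (by continuity) 0 1)
        · exact (Continuous.intervalIntegrable (by continuity) 0 1)
      · exact (Continuous.intervalIntegrable (by continuity) 0 1)
    have hΓpos : 0 < Real.Gamma ((k:ℝ) + 3/2) := Real.Gamma_pos_of_pos (by positivity)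
    push_cast
    rw [Gamma_succ_32 k]
    have hfac : ((Nat.factorial (k+1) : ℝ)) = ((k:ℝ)+1) * (Nat.factorial k) := by
      push_cast [Nat.factorial_succ]; ring
    push_cast at hfac ⊢
    rw [hfac]
    have h2 : (∫ s in (0:ℝ)..1, (1-s^2)^(k+1))
        = (2*(k:ℝ)+2)/(2*(k:ℝ)+3) * ∫ s in (0:ℝ)..1, (1-s^2)^k := by
      field_simp at hrec ⊢
      linarith [hrec]
    rw [h2, ih]
    field_simp

lemma exp_eq_tsum' (x : ℝ) : Real.exp x = ∑' n : ℕ, x^n / (Nat.factorial n) := by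
  rw [Real.exp_eq_exp_ℝ, NormedSpace.exp_eq_tsum_div]

lemma gamma32_pos (k : ℕ) : 0 < Real.Gamma ((k:ℝ) + 3/2) :=
  Real.Gamma_pos_of_pos (by positivity)

lemma J_le_one (k : ℕ) :
    Real.sqrt π * (Nat.factorial k) / (2 * Real.Gamma ((k:ℝ) + 3/2)) ≤ 1 := by
  rw [← J_val k]
  calc (∫ s in (0:ℝ)..1, (1-s^2)^k) ≤ ∫ s in (0:ℝ)..1, (1:ℝ) := by
        apply intervalIntegral.integral_mono_on zero_le_one
          (Continuous.intervalIntegrable (by continuity) 0 1) intervalIntegrable_const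
        intro s hs
        have h1 : (0:ℝ) ≤ 1 - s^2 := by nlinarith [hs.1, hs.2]
        calc (1-s^2)^k ≤ 1^k := pow_le_pow_left₀ h1 (by nlinarith [hs.1]) k
          _ = 1 := one_pow k
    _ = 1 := by simp

lemma erf_series (w : ℝ) :
    Summable (fun k : ℕ => (w^2)^k / Real.Gamma ((k:ℝ) + 3/2)) ∧
    w * ∑' k : ℕ, (w^2)^k / Real.Gamma ((k:ℝ) + 3/2) = Real.exp (w^2) * erf w := by
  have hπ : (0:ℝ) < Real.sqrt π := Real.sqrt_pos.mpr Real.pi_pos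
  set F : ℕ → ℝ → ℝ := fun k s => (w^2)^k * (1-s^2)^k / (Nat.factorial k) with hF
  have hFint : ∀ k, Integrable (F k) (volume.restrict (Set.Ioc (0:ℝ) 1)) := by
    intro k
    exact (Continuous.integrableOn_Ioc (by continuity))
  have hJset : ∀ k, (∫ s in Set.Ioc (0:ℝ) 1, (1-s^2)^k)
      = Real.sqrt π * (Nat.factorial k) / (2 * Real.Gamma ((k:ℝ) + 3/2)) := by
    intro k
    rw [← intervalIntegral.integral_of_le zero_le_one]
    exact J_val k
  have hval : ∀ k, (∫ s in Set.Ioc (0:ℝ) 1, F k s)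
      = Real.sqrt π / 2 * ((w^2)^k / Real.Gamma ((k:ℝ) + 3/2)) := by
    intro k
    have : (∫ s in Set.Ioc (0:ℝ) 1, F k s)
        = (w^2)^k / (Nat.factorial k) * ∫ s in Set.Ioc (0:ℝ) 1, (1-s^2)^k := by
      rw [← MeasureTheory.integral_const_mul]
      apply setIntegral_congr_fun measurableSet_Ioc
      intro s _
      simp only [hF]
      ring
    rw [this, hJset k]
    have hfac : (0:ℝ) < (Nat.factorial k : ℝ) := by positivity
    field_simp
  have hnn : ∀ k, ∀ s ∈ Set.Ioc (0:ℝ) 1, 0 ≤ F k s := by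
    intro k s hs
    have h1 : (0:ℝ) ≤ 1 - s^2 := by nlinarith [hs.1, hs.2]
    simp only [hF]
    positivity
  have hnormval : ∀ k, (∫ s in Set.Ioc (0:ℝ) 1, ‖F k s‖)
      = Real.sqrt π / 2 * ((w^2)^k / Real.Gamma ((k:ℝ) + 3/2)) := by
    intro k
    rw [← hval k]
    apply setIntegral_congr_fun measurableSet_Ioc
    intro s hs
    exact Real.norm_of_nonneg (hnn k s hs)
  have hsumnorm : Summable (fun k => ∫ s in Set.Ioc (0:ℝ) 1, ‖F k s‖) := by
    apply Summable.of_nonneg_of_le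
      (fun k => integral_nonneg (fun s => norm_nonneg _))
      (fun k => ?_) (Real.summable_pow_div_factorial (w^2))
    rw [hnormval k]
    have h1 := J_le_one k
    have h2 := gamma32_pos k
    have hfac : (0:ℝ) < (Nat.factorial k : ℝ) := by positivity
    have hw : (0:ℝ) ≤ (w^2)^k := by positivity
    calc Real.sqrt π / 2 * ((w^2)^k / Real.Gamma ((k:ℝ) + 3/2))
        = (w^2)^k / (Nat.factorial k) * (Real.sqrt π * (Nat.factorial k) / (2 * Real.Gamma ((k:ℝ) + 3/2))) := by
          field_simp
      _ ≤ (w^2)^k / (Nat.factorial k) * 1 := by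
          apply mul_le_mul_of_nonneg_left h1 (by positivity)
      _ = (w^2)^k / (Nat.factorial k) := mul_one _
  have hsummable : Summable (fun k : ℕ => (w^2)^k / Real.Gamma ((k:ℝ) + 3/2)) := by
    have := hsumnorm
    simp_rw [hnormval] at this
    have h2 := this.mul_left (2 / Real.sqrt π)
    apply h2.congr
    intro k
    field_simp
  have key := MeasureTheory.integral_tsum_of_summable_integral_norm hFint hsumnorm
  have hptwise : ∀ s : ℝ, (∑' k, F k s) = Real.exp (w^2 * (1-s^2)) := by
    intro s
    rw [exp_eq_tsum' (w^2 * (1-s^2))]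
    apply tsum_congr
    intro k
    simp only [hF, mul_pow]
  simp_rw [hval, hptwise] at key
  -- key : ∑' k, √π/2 * ((w²)^k/Γ(k+3/2)) = ∫ s in Ioc 0 1, exp (w² (1-s²))
  rw [tsum_mul_left] at key
  refine ⟨hsummable, ?_⟩
  -- now RHS computation
  have hcomp : (∫ t in (0:ℝ)..w, Real.exp (-t^2))
      = w * ∫ s in (0:ℝ)..1, Real.exp (-(w*s)^2) := by
    have := intervalIntegral.mul_integral_comp_mul_left (a := 0) (b := 1) (c := w)
      (f := fun t => Real.exp (-t^2))
    simp only [mul_zero, mul_one] at this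
    rw [this]
  have hpull : Real.exp (w^2) * ∫ s in (0:ℝ)..1, Real.exp (-(w*s)^2)
      = ∫ s in (0:ℝ)..1, Real.exp (w^2 * (1-s^2)) := by
    rw [← intervalIntegral.integral_const_mul]
    apply intervalIntegral.integral_congr
    intro s _
    show Real.exp (w^2) * Real.exp (-(w*s)^2) = Real.exp (w^2 * (1-s^2))
    rw [← Real.exp_add]
    congr 1
    ring
  rw [erf_eq_intervalIntegral w]
  rw [← intervalIntegral.integral_of_le zero_le_one] at key
  rw [← key] at hpull
  -- hpull : exp(w²) * ∫₀¹ exp(-(ws)²) = √π/2 * ∑' ...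
  rw [hcomp]
  have : Real.exp (w^2) * ((2 / Real.sqrt π) * (w * ∫ s in (0:ℝ)..1, Real.exp (-(w*s)^2)))
      = (2 / Real.sqrt π) * w * (Real.exp (w^2) * ∫ s in (0:ℝ)..1, Real.exp (-(w*s)^2)) := by
    ring
  rw [this, hpull]
  field_simp
  ring

lemma summable_K {r A : ℝ} (hr : 0 ≤ r) (hA : 0 < A) :
    Summable (fun j : ℕ =>
      r^j * Real.Gamma (A + 1 + j) / (Real.Gamma ((j:ℝ) + 3/2) * (Nat.factorial j))) := by
  set f : ℕ → ℝ := fun j =>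
    r^j * Real.Gamma (A + 1 + j) / (Real.Gamma ((j:ℝ) + 3/2) * (Nat.factorial j)) with hf
  have hfnn : ∀ j, 0 ≤ f j := by
    intro j
    have h1 : 0 < Real.Gamma (A + 1 + j) := Real.Gamma_pos_of_pos (by positivity)
    have h2 : 0 < Real.Gamma ((j:ℝ) + 3/2) := Real.Gamma_pos_of_pos (by positivity)
    have h3 : (0:ℝ) < (Nat.factorial j : ℝ) := by positivity
    positivity
  apply summable_of_ratio_norm_eventually_le (r := 1/2) (by norm_num)
  rw [Filter.eventually_atTop]
  refine ⟨⌈2*r*(A+1)⌉₊ + ⌈2*r⌉₊ + 1, fun j hj => ?_⟩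
  have hj1 : 2*r*(A+1) ≤ (j:ℝ) := by
    calc 2*r*(A+1) ≤ (⌈2*r*(A+1)⌉₊ : ℝ) := Nat.le_ceil _
      _ ≤ (j:ℝ) := by exact_mod_cast Nat.le_of_lt (by omega)
  have hj2 : 2*r ≤ (j:ℝ) := by
    calc 2*r ≤ (⌈2*r⌉₊ : ℝ) := Nat.le_ceil _
      _ ≤ (j:ℝ) := by exact_mod_cast Nat.le_of_lt (by omega)
  have hstep : f (j+1) = f j * (r * (A + 1 + j) / (((j:ℝ) + 3/2) * ((j:ℝ)+1))) := by
    simp only [hf]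
    have e1 : A + 1 + ((j:ℕ)+1 : ℕ) = (A + 1 + (j:ℝ)) + 1 := by push_cast; ring
    have e2 : (((j:ℕ)+1 : ℕ) : ℝ) + 3/2 = ((j:ℝ) + 3/2) + 1 := by push_cast; ring
    rw [e1, e2, Real.Gamma_add_one (by positivity : A + 1 + (j:ℝ) ≠ 0),
      Real.Gamma_add_one (by positivity : (j:ℝ) + 3/2 ≠ 0), Nat.factorial_succ]
    have h2 : 0 < Real.Gamma ((j:ℝ) + 3/2) := Real.Gamma_pos_of_pos (by positivity)
    have h3 : (0:ℝ) < (Nat.factorial j : ℝ) := by positivity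
    push_cast
    rw [pow_succ]
    field_simp
  rw [Real.norm_of_nonneg (hfnn _), Real.norm_of_nonneg (hfnn _), hstep]
  have hq : r * (A + 1 + j) / (((j:ℝ) + 3/2) * ((j:ℝ)+1)) ≤ 1/2 := by
    rw [div_le_div_iff₀ (by positivity) (by norm_num)]
    nlinarith [hj1, hj2, hr, hA.le, Nat.cast_nonneg (α := ℝ) j]
  calc f j * (r * (A + 1 + j) / (((j:ℝ) + 3/2) * ((j:ℝ)+1)))
      ≤ f j * (1/2) := mul_le_mul_of_nonneg_left hq (hfnn j)
    _ = 1/2 * f j := by ring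

theorem Qnt_integral_rep_complementary (n x δ : ℝ) (hn : 0 < n) (hx : 0 < x)
    (y : ℝ) (hy : y = x^2 / (n + x^2)) :
    Qnt n x δ =
      (1/2) * erf (δ / Real.sqrt 2) -
        (δ * n * Real.exp (-δ^2/2) / (2 * Real.sqrt (2 * π))) *
          ∫ t in (0:ℝ)..(1 - y),
            t ^ (n/2 - 1) * kummerM (n/2 + 1) (3/2) (δ^2 * (1 - t) / 2) := by
  have hden : 0 < n + x^2 := by positivity
  have hy0 : 0 ≤ y := by rw [hy]; positivity
  have hy1 : y < 1 := by rw [hy, div_lt_one hden]; nlinarith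
  unfold Qnt
  rw [← hy]
  set a : ℝ := n/2 with ha'
  have ha : 0 < a := by positivity
  set z : ℝ := 1 - y with hzdef
  have hz0 : 0 < z := by rw [hzdef]; linarith
  have hz1 : z ≤ 1 := by rw [hzdef]; linarith
  set w : ℝ := δ / Real.sqrt 2 with hwdef
  have hs2 : (0:ℝ) < Real.sqrt 2 := by positivity
  have hπ : (0:ℝ) < Real.sqrt π := Real.sqrt_pos.mpr Real.pi_pos
  have hw2 : w^2 = δ^2/2 := by
    rw [hwdef, div_pow, Real.sq_sqrt (by norm_num : (0:ℝ) ≤ 2)]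
  have hΓa : 0 < Real.Gamma a := Real.Gamma_pos_of_pos ha
  set K : ℕ → ℝ := fun j => (δ^2/2)^j * Real.Gamma (a + 1 + j) /
    (Real.Gamma ((j:ℝ)+3/2) * (Nat.factorial j)) with hK
  have hKnn : ∀ j, 0 ≤ K j := by
    intro j
    have h1 : 0 < Real.Gamma (a + 1 + j) := Real.Gamma_pos_of_pos (by positivity)
    have h2 := gamma32_pos j
    have h3 : (0:ℝ) < (Nat.factorial j : ℝ) := by positivity
    have h4 : (0:ℝ) ≤ (δ^2/2)^j := by positivity
    rw [hK]
    positivity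
  have hKsum : Summable K := summable_K (by positivity) ha
  set c : ℕ → ℝ := fun j => w * ((δ^2/2)^j / Real.Gamma ((j:ℝ)+3/2)) with hc
  set I : ℕ → ℝ := fun j => ∫ t in Set.Ioc (0:ℝ) z, t^(a-1) * (1-t)^j with hI
  set G : ℕ → ℝ → ℝ := fun j t => (K j / Real.Gamma a) * (t^(a-1) * (1-t)^j) with hG
  have hbase : IntervalIntegrable (fun t : ℝ => t^(a-1)) volume 0 z :=
    intervalIntegrable_rpow' (by linarith)
  have hjint : ∀ j : ℕ, IntegrableOn (fun t : ℝ => t^(a-1) * (1-t)^j) (Set.Ioc 0 z) volume := by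
    intro j
    rw [← intervalIntegrable_iff_integrableOn_Ioc_of_le hz0.le]
    exact hbase.mul_continuousOn (Continuous.continuousOn (by continuity))
  have hGint : ∀ j, Integrable (G j) (volume.restrict (Set.Ioc (0:ℝ) z)) := by
    intro j
    exact ((hjint j).const_mul _)
  have hptnn : ∀ j : ℕ, ∀ t ∈ Set.Ioc (0:ℝ) z, 0 ≤ t^(a-1) * (1-t)^j := by
    intro j t ht
    have h1 : (0:ℝ) ≤ t := ht.1.le
    have h2 : (0:ℝ) ≤ 1 - t := by
      have := ht.2
      linarith [hz1]
    positivity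
  have hInn : ∀ j, 0 ≤ I j := by
    intro j
    exact setIntegral_nonneg measurableSet_Ioc (hptnn j)
  set C : ℝ := ∫ t in Set.Ioc (0:ℝ) z, t^(a-1) with hC
  have hCint : IntegrableOn (fun t : ℝ => t^(a-1)) (Set.Ioc 0 z) volume := by
    rw [← intervalIntegrable_iff_integrableOn_Ioc_of_le hz0.le]
    exact hbase
  have hIle : ∀ j, I j ≤ C := by
    intro j
    apply setIntegral_mono_on (hjint j) hCint measurableSet_Ioc
    intro t ht
    have h1 : (0:ℝ) < t := ht.1
    have h2 : (0:ℝ) ≤ 1 - t := by linarith [ht.2, hz1]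
    have h3 : (1-t)^j ≤ 1 := pow_le_one₀ h2 (by linarith [h1])
    calc t^(a-1) * (1-t)^j ≤ t^(a-1) * 1 :=
          mul_le_mul_of_nonneg_left h3 (Real.rpow_nonneg h1.le _)
      _ = t^(a-1) := mul_one _
  have hGnorm : ∀ j, (∫ t in Set.Ioc (0:ℝ) z, ‖G j t‖) = (K j / Real.Gamma a) * I j := by
    intro j
    rw [hI, ← MeasureTheory.integral_const_mul]
    apply setIntegral_congr_fun measurableSet_Ioc
    intro t ht
    rw [hG]
    exact Real.norm_of_nonneg (mul_nonneg (by positivity) (hptnn j t ht))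
  have hGsumnorm : Summable (fun j => ∫ t in Set.Ioc (0:ℝ) z, ‖G j t‖) := by
    apply Summable.of_nonneg_of_le (fun j => integral_nonneg (fun t => norm_nonneg _))
      (fun j => ?_) ((hKsum.mul_right (C / Real.Gamma a)))
    rw [hGnorm j]
    have := hIle j
    have hCnn : 0 ≤ C := le_trans (hInn 0) (hIle 0)
    calc K j / Real.Gamma a * I j ≤ K j / Real.Gamma a * C :=
          mul_le_mul_of_nonneg_left (hIle j) (by positivity)
      _ = K j * (C / Real.Gamma a) := by field_simp
  have key := MeasureTheory.integral_tsum_of_summable_integral_norm hGint hGsumnorm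
  -- pointwise kummer identity
  have hptwise : ∀ t ∈ Set.Ioc (0:ℝ) z, (∑' j, G j t)
      = (n / Real.sqrt π) * (t^(a-1) * kummerM (a+1) (3/2) (δ^2 * (1-t)/2)) := by
    intro t ht
    have h2 : (0:ℝ) ≤ 1 - t := by linarith [ht.2, hz1]
    rw [kummerM, ← tsum_mul_left, ← tsum_mul_left]
    apply tsum_congr
    intro j
    have hΓj32 : Real.Gamma (3/2 + (j:ℝ)) = Real.Gamma ((j:ℝ) + 3/2) := by rw [add_comm]
    have hΓa1 : Real.Gamma (a + 1 + (j:ℝ)) = Real.Gamma (a+1+(j:ℝ)) := rfl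
    have hΓa1v : Real.Gamma (a + 1) = a * Real.Gamma a := by
      rw [Real.Gamma_add_one ha.ne']
    have hz' : (δ^2 * (1-t)/2)^j = (δ^2/2)^j * (1-t)^j := by
      rw [← mul_pow]; congr 1; ring
    have hn2a : n = 2 * a := by rw [ha']; ring
    rw [hG, hK]
    rw [hΓj32, hΓa1v, Gamma_32, hz', hn2a]
    have h1 := gamma32_pos j
    have h3 : (0:ℝ) < (Nat.factorial j : ℝ) := by positivity
    field_simp
  have hsetint : ∫ t in Set.Ioc (0:ℝ) z, (∑' j, G j t)
      = (n / Real.sqrt π) * ∫ t in (0:ℝ)..z, t^(a-1) * kummerM (a+1) (3/2) (δ^2 * (1-t)/2) := by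
    rw [intervalIntegral.integral_of_le hz0.le, ← MeasureTheory.integral_const_mul]
    apply setIntegral_congr_fun measurableSet_Ioc
    intro t ht
    exact hptwise t ht
  -- term rewrite
  have hterm : ∀ j : ℕ,
      (δ / Real.sqrt 2) * ((δ^2/2)^j / Real.Gamma ((j:ℝ) + 3/2)) * regIncBeta y ((j:ℝ) + 1) (n/2)
      = c j - w * ∫ t in Set.Ioc (0:ℝ) z, G j t := by
    intro j
    have hcompl := regIncBeta_compl (a := (j:ℝ)+1) (b := n/2) (by positivity) (by positivity)
      hy0 hy1.le
    rw [hcompl]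
    have hIoc : (∫ t in (0:ℝ)..(1-y), t^((n/2)-1) * (1-t)^(((j:ℝ)+1)-1)) = I j := by
      rw [← hzdef, intervalIntegral.integral_of_le hz0.le, hI]
      apply setIntegral_congr_fun measurableSet_Ioc
      intro t ht
      have harg : ((j:ℝ)+1-1) = ((j:ℕ):ℝ) := by push_cast; ring
      simp only [harg, Real.rpow_natCast, ha']
    have hGval : (∫ t in Set.Ioc (0:ℝ) z, G j t) = (K j / Real.Gamma a) * I j := by
      rw [hG, hI, ← MeasureTheory.integral_const_mul]
    rw [hGval]
    rw [regIncBeta, hIoc, betaFn]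
    have hfac : Real.Gamma ((j:ℝ)+1) = (Nat.factorial j : ℝ) := by
      exact_mod_cast Real.Gamma_nat_eq_factorial j
    have harg2 : (n/2) + ((j:ℝ)+1) = a + 1 + (j:ℝ) := by rw [ha']; ring
    rw [harg2, hfac]
    have h1 := gamma32_pos j
    have h2 : 0 < Real.Gamma (a + 1 + (j:ℝ)) := Real.Gamma_pos_of_pos (by positivity)
    have h3 : (0:ℝ) < (Nat.factorial j : ℝ) := by positivity
    rw [hc, hK, hwdef, ← ha']
    field_simp
  rw [tsum_congr hterm]
  -- summabilities
  have hS1 : Summable c := by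
    have h := (erf_series w).1
    simp_rw [hw2] at h
    exact h.mul_left w
  have hS2 : Summable (fun j => w * ∫ t in Set.Ioc (0:ℝ) z, G j t) := by
    apply Summable.of_norm_bounded (hGsumnorm.mul_left |w|)
    intro j
    rw [norm_mul]
    apply mul_le_mul_of_nonneg_left _ (abs_nonneg w)
    exact norm_integral_le_integral_norm _
  rw [Summable.tsum_sub hS1 hS2]
  have hsum1 : ∑' j, c j = Real.exp (δ^2/2) * erf w := by
    have h := (erf_series w).2
    simp_rw [hw2] at h
    rw [hc, tsum_mul_left, h]
  have hsum2 : ∑' j, (w * ∫ t in Set.Ioc (0:ℝ) z, G j t)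
      = w * ((n / Real.sqrt π) * ∫ t in (0:ℝ)..z, t^(a-1) * kummerM (a+1) (3/2) (δ^2 * (1-t)/2)) := by
    rw [tsum_mul_left, key, hsetint]
  rw [hsum1, hsum2]
  have hexp : Real.exp (-δ^2/2) * Real.exp (δ^2/2) = 1 := by
    rw [← Real.exp_add, show -δ^2/2 + δ^2/2 = 0 by ring, Real.exp_zero]
  have hsqrt2π : Real.sqrt (2*π) = Real.sqrt 2 * Real.sqrt π := Real.sqrt_mul (by norm_num) _
  rw [mul_sub]
  congr 1
  · rw [show (1/2) * Real.exp (-δ^2/2) * (Real.exp (δ^2/2) * erf w)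
        = (Real.exp (-δ^2/2) * Real.exp (δ^2/2)) * ((1/2) * erf w) by ring, hexp, one_mul]
  · rw [hsqrt2π, hwdef]
    field_simp
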